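/- For every integer k ≥ 1, one has K^{k}𝟏(x₀) ≥ (C_β/(C_β+C_δ))^{k} · k^{−(C_β+C_δ)/C_R}. -/

import Mathlib

open MeasureTheory

/-- Birth rate in the allometric setting with `β = α−1`: `b(x) = C_β x^{α−1}` for
`x > x₀` and `0` otherwise. -/
noncomputable def birthRate (x₀ Cβ α : ℝ) (x : ℝ) : ℝ :=
  if x₀ < x then Cβ * x ^ (α - 1) else 0

/-- Death rate `d(x) = C_δ x^{α−1}`. -/
noncomputable def deathRate (Cδ α : ℝ) (x : ℝ) : ℝ := Cδ * x ^ (α - 1)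

/-- Net energy gain `g(x) = C_R x^α`. -/
noncomputable def energyGain (CR α : ℝ) (x : ℝ) : ℝ := CR * x ^ α

/-- The operator `K`:
`K f(ξ) = ∫_ξ^∞ (b(x)/g(x)) exp(−∫_ξ^x (b+d)/g) f(x−x₀) dx`. -/
noncomputable def Kop (x₀ Cβ Cδ CR α : ℝ) (f : ℝ → ℝ) (ξ : ℝ) : ℝ :=
  ∫ x in Set.Ioi ξ,
    birthRate x₀ Cβ α x / energyGain CR α x *
      Real.exp
        (-(∫ τ in ξ..x,
            (birthRate x₀ Cβ α τ + deathRate Cδ α τ) / energyGain CR α τ)) *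
      f (x - x₀)


open Set Real

namespace Stmt11Aux

lemma measurable_rpow_const' (c : ℝ) : Measurable fun x : ℝ => x ^ c :=
  measurable_of_continuousOn_compl_singleton 0 fun x hx =>
    (Real.continuousAt_rpow_const x c (Or.inl (by simpa using hx))).continuousWithinAt

/-- the integrand of the inner integral -/
noncomputable def wF (x₀ Cβ Cδ CR α : ℝ) (τ : ℝ) : ℝ :=
  (birthRate x₀ Cβ α τ + deathRate Cδ α τ) / energyGain CR α τ

section

variable {α x₀ Cβ Cδ CR : ℝ}

lemma exp_eval {a x : ℝ} (c : ℝ) (ha : 0 < a) (hx : 0 < x) :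
    Real.exp (-(c * Real.log (x / a))) = a ^ c * x ^ (-c) := by
  have hu : 0 < x / a := div_pos hx ha
  rw [show -(c * Real.log (x / a)) = Real.log (x / a) * (-c) by ring,
    ← Real.rpow_def_of_pos hu, Real.div_rpow hx.le ha.le, Real.rpow_neg ha.le c,
    div_inv_eq_mul]
  ring

lemma inv_mul_rpow {x : ℝ} (c : ℝ) (hx : 0 < x) : x⁻¹ * x ^ (-c) = x ^ (-c - 1) := by
  rw [show -c - 1 = -c + -1 by ring, Real.rpow_add hx, Real.rpow_neg_one]; ring

lemma wF_gt (hx₀ : 0 < x₀) {τ : ℝ} (h : x₀ < τ) :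
    wF x₀ Cβ Cδ CR α τ = ((Cβ + Cδ) / CR) * τ⁻¹ := by
  have hτ : 0 < τ := hx₀.trans h
  have h1 : τ ^ α ≠ 0 := (Real.rpow_pos_of_pos hτ α).ne'
  unfold wF birthRate deathRate energyGain
  rw [if_pos h, Real.rpow_sub hτ, Real.rpow_one]
  by_cases hCR : CR = 0
  · simp [hCR]
  field_simp

lemma wF_le {τ : ℝ} (hτ : 0 < τ) (h : ¬ x₀ < τ) :
    wF x₀ Cβ Cδ CR α τ = (Cδ / CR) * τ⁻¹ := by
  have h1 : τ ^ α ≠ 0 := (Real.rpow_pos_of_pos hτ α).ne'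
  unfold wF birthRate deathRate energyGain
  rw [if_neg h, Real.rpow_sub hτ, Real.rpow_one]
  by_cases hCR : CR = 0
  · simp [hCR]
  field_simp
  ring

lemma wF_nonneg (hx₀ : 0 < x₀) (hCβ : 0 < Cβ) (hCδ : 0 < Cδ) (hCR : 0 < CR)
    {τ : ℝ} (hτ : 0 < τ) : 0 ≤ wF x₀ Cβ Cδ CR α τ := by
  by_cases h : x₀ < τ
  · rw [wF_gt hx₀ h]
    exact mul_nonneg (div_nonneg (by linarith) hCR.le) (inv_nonneg.2 hτ.le)
  · rw [wF_le hτ h]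
    exact mul_nonneg (div_nonneg hCδ.le hCR.le) (inv_nonneg.2 hτ.le)

lemma wF_intervalIntegrable (hx₀ : 0 < x₀) {a b : ℝ} (ha : 0 < a) (hb : 0 < b) :
    IntervalIntegrable (wF x₀ Cβ Cδ CR α) volume a b := by
  have hmin : 0 < min a b := lt_min ha hb
  have h0 : ∀ x ∈ uIcc a b, x ≠ 0 := fun x hx => (hmin.trans_le hx.1).ne'
  have hc : ContinuousOn (fun τ : ℝ => τ⁻¹) (uIcc a b) :=
    continuousOn_inv₀.mono fun x hx => h0 x hx
  have hV1 : IntervalIntegrable (fun τ : ℝ => (Cδ / CR) * τ⁻¹) volume a b :=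
    (continuousOn_const.mul hc).intervalIntegrable
  have hV2 : IntervalIntegrable (fun τ : ℝ => (Cβ / CR) * τ⁻¹) volume a b :=
    (continuousOn_const.mul hc).intervalIntegrable
  have hV2' : IntervalIntegrable
      (Set.indicator (Ioi x₀) (fun τ : ℝ => (Cβ / CR) * τ⁻¹)) volume a b := by
    rw [intervalIntegrable_iff] at hV2 ⊢
    exact hV2.integrable.indicator measurableSet_Ioi
  refine (hV1.add hV2').congr ?_
  intro τ hτ
  dsimp only
  have hτpos : 0 < τ := hmin.trans hτ.1
  by_cases hcase : x₀ < τ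
  · rw [Set.indicator_of_mem (Set.mem_Ioi.2 hcase), wF_gt hx₀ hcase]
    by_cases hCR : CR = 0
    · simp [hCR]
    field_simp
    ring
  · rw [Set.indicator_of_notMem (fun h => hcase (Set.mem_Ioi.1 h)), wF_le hτpos hcase, add_zero]

lemma inner_eq (hx₀ : 0 < x₀) {ξ x : ℝ} (hξ : x₀ ≤ ξ) (hx : ξ ≤ x) :
    ∫ τ in ξ..x, wF x₀ Cβ Cδ CR α τ = ((Cβ + Cδ) / CR) * Real.log (x / ξ) := by
  have hξ0 : 0 < ξ := hx₀.trans_le hξ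
  have h1 : ∫ τ in ξ..x, wF x₀ Cβ Cδ CR α τ
      = ∫ τ in ξ..x, ((Cβ + Cδ) / CR) * τ⁻¹ := by
    apply intervalIntegral.integral_congr_ae
    filter_upwards with τ hτ
    rw [Set.uIoc_of_le hx] at hτ
    exact wF_gt hx₀ (hξ.trans_lt hτ.1)
  rw [h1, intervalIntegral.integral_const_mul,
    integral_inv_of_pos hξ0 (hξ0.trans_le hx)]

lemma inner_lt (hx₀ : 0 < x₀) {ξ x : ℝ} (hξ : 0 < ξ) (hξ' : ξ ≤ x₀) (hx : x₀ ≤ x) :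
    ∫ τ in ξ..x, wF x₀ Cβ Cδ CR α τ
      = (Cδ / CR) * Real.log (x₀ / ξ) + ((Cβ + Cδ) / CR) * Real.log (x / x₀) := by
  rw [← intervalIntegral.integral_add_adjacent_intervals
    (wF_intervalIntegrable hx₀ hξ hx₀) (wF_intervalIntegrable hx₀ hx₀ (hx₀.trans_le hx))]
  have h1 : ∫ τ in ξ..x₀, wF x₀ Cβ Cδ CR α τ = ∫ τ in ξ..x₀, (Cδ / CR) * τ⁻¹ := by
    apply intervalIntegral.integral_congr_ae
    filter_upwards with τ hτ
    rw [Set.uIoc_of_le hξ'] at hτ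
    exact wF_le (hξ.trans hτ.1) (not_lt.2 hτ.2)
  rw [h1, intervalIntegral.integral_const_mul, integral_inv_of_pos hξ hx₀,
    inner_eq hx₀ le_rfl hx]

lemma inner_ge (hx₀ : 0 < x₀) (hCβ : 0 < Cβ) (hCδ : 0 < Cδ) (hCR : 0 < CR)
    {ξ x : ℝ} (hξ : 0 < ξ) (hx : max ξ x₀ < x) :
    ((Cβ + Cδ) / CR) * Real.log (x / max ξ x₀) ≤ ∫ τ in ξ..x, wF x₀ Cβ Cδ CR α τ := by
  set M := max ξ x₀ with hM
  have hMpos : 0 < M := lt_max_of_lt_right hx₀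
  have hxpos : 0 < x := hMpos.trans hx
  rw [← intervalIntegral.integral_add_adjacent_intervals
    (wF_intervalIntegrable hx₀ hξ hMpos) (wF_intervalIntegrable hx₀ hMpos hxpos)]
  have h2 : ∫ τ in M..x, wF x₀ Cβ Cδ CR α τ = ((Cβ + Cδ) / CR) * Real.log (x / M) :=
    inner_eq hx₀ (le_max_right ξ x₀) hx.le
  have h1 : 0 ≤ ∫ τ in ξ..M, wF x₀ Cβ Cδ CR α τ :=
    intervalIntegral.integral_nonneg (le_max_left ξ x₀)
      (fun u hu => wF_nonneg hx₀ hCβ hCδ hCR (hξ.trans_le hu.1))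
  linarith

lemma bg_eq (hx₀ : 0 < x₀) {x : ℝ} (hxx : x₀ < x) :
    birthRate x₀ Cβ α x / energyGain CR α x = (Cβ / CR) * x⁻¹ := by
  have hxp : 0 < x := hx₀.trans hxx
  have hxα : x ^ α ≠ 0 := (Real.rpow_pos_of_pos hxp α).ne'
  unfold birthRate energyGain
  rw [if_pos hxx, Real.rpow_sub hxp, Real.rpow_one]
  by_cases hCR : CR = 0
  · simp [hCR]
  field_simp

lemma bg_zero {x : ℝ} (hxx : ¬ x₀ < x) :
    birthRate x₀ Cβ α x / energyGain CR α x = 0 := by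
  unfold birthRate energyGain
  rw [if_neg hxx, zero_div]

lemma bg_nonneg (hx₀ : 0 < x₀) (hCβ : 0 < Cβ) (hCR : 0 < CR) (x : ℝ) :
    0 ≤ birthRate x₀ Cβ α x / energyGain CR α x := by
  by_cases h : x₀ < x
  · have hxp : 0 < x := hx₀.trans h
    rw [bg_eq hx₀ h]
    exact mul_nonneg (div_nonneg hCβ.le hCR.le) (inv_nonneg.2 hxp.le)
  · rw [bg_zero h]

lemma Kop_eq (hx₀ : 0 < x₀) {ξ : ℝ} (hξ : x₀ ≤ ξ) (f : ℝ → ℝ) :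
    Kop x₀ Cβ Cδ CR α f ξ
      = ∫ x in Ioi ξ, (Cβ / CR) * (ξ ^ ((Cβ + Cδ) / CR) * x ^ (-((Cβ + Cδ) / CR) - 1))
          * f (x - x₀) := by
  have hξ0 : 0 < ξ := hx₀.trans_le hξ
  unfold Kop
  apply setIntegral_congr_fun measurableSet_Ioi
  intro x hx
  have hxx : x₀ < x := hξ.trans_lt hx
  have hxp : 0 < x := hx₀.trans hxx
  have e0 : (∫ τ in ξ..x, wF x₀ Cβ Cδ CR α τ)
      = ((Cβ + Cδ) / CR) * Real.log (x / ξ) := inner_eq hx₀ hξ (le_of_lt hx)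
  simp only [wF] at e0
  dsimp only
  rw [e0, exp_eval ((Cβ + Cδ) / CR) hξ0 hxp, bg_eq hx₀ hxx,
    ← inv_mul_rpow ((Cβ + Cδ) / CR) hxp]
  ring

lemma Kop_nonneg (hx₀ : 0 < x₀) (hCβ : 0 < Cβ) (hCR : 0 < CR)
    (f : ℝ → ℝ) (hf : ∀ y, 0 ≤ f y) (ξ : ℝ) : 0 ≤ Kop x₀ Cβ Cδ CR α f ξ := by
  unfold Kop
  apply setIntegral_nonneg measurableSet_Ioi
  intro x _
  exact mul_nonneg (mul_nonneg (bg_nonneg hx₀ hCβ hCR x) (Real.exp_pos _).le) (hf _)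

lemma rpow_model_integral {M γ : ℝ} (hγ : 0 < γ) (hM : 0 < M) (c : ℝ) :
    ∫ x in Ioi M, c * x ^ (-γ - 1) = c * M ^ (-γ) / γ := by
  rw [MeasureTheory.integral_const_mul, integral_Ioi_rpow_of_lt (by linarith) hM,
    show -γ - 1 + 1 = -γ by ring, neg_div, div_neg, neg_neg]
  ring

lemma Kop_le_p (hx₀ : 0 < x₀) (hCβ : 0 < Cβ) (hCδ : 0 < Cδ) (hCR : 0 < CR)
    (f : ℝ → ℝ) (hf0 : ∀ y, 0 ≤ f y) (hf1 : ∀ y, 0 < y → f y ≤ 1)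
    {ξ : ℝ} (hξ : 0 < ξ) : Kop x₀ Cβ Cδ CR α f ξ ≤ Cβ / (Cβ + Cδ) := by
  have hsum : 0 < Cβ + Cδ := by linarith
  have hγ : 0 < (Cβ + Cδ) / CR := div_pos hsum hCR
  set γ := (Cβ + Cδ) / CR with hγdef
  set M := max ξ x₀ with hMdef
  have hM : 0 < M := lt_max_of_lt_right hx₀
  set G : ℝ → ℝ := Set.indicator (Ioi M) (fun x => ((Cβ / CR) * M ^ γ) * x ^ (-γ - 1))
    with hGdef
  have hGin : IntegrableOn (fun x : ℝ => ((Cβ / CR) * M ^ γ) * x ^ (-γ - 1)) (Ioi M) :=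
    (integrableOn_Ioi_rpow_of_lt (by linarith) hM).const_mul _
  have hGint : Integrable G volume := (integrable_indicator_iff measurableSet_Ioi).2 hGin
  have hGnn : ∀ x, 0 ≤ G x := by
    intro x
    apply Set.indicator_nonneg
    intro y hy
    have hyp : 0 < y := hM.trans hy
    exact mul_nonneg (mul_nonneg (div_nonneg hCβ.le hCR.le) (Real.rpow_nonneg hM.le _))
      (Real.rpow_nonneg hyp.le _)
  have hGle : Kop x₀ Cβ Cδ CR α f ξ ≤ ∫ x in Ioi ξ, G x := by
    unfold Kop
    apply integral_mono_of_nonneg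
    · filter_upwards with x
      exact mul_nonneg (mul_nonneg (bg_nonneg hx₀ hCβ hCR x) (Real.exp_pos _).le) (hf0 _)
    · exact hGint.integrableOn
    · rw [Filter.EventuallyLE, ae_restrict_iff' measurableSet_Ioi]
      apply Filter.Eventually.of_forall
      intro x hx
      by_cases hxx : x₀ < x
      · have hxM : M < x := max_lt hx hxx
        have hxp : 0 < x := hx₀.trans hxx
        have hexp : Real.exp (-(∫ τ in ξ..x,
              (birthRate x₀ Cβ α τ + deathRate Cδ α τ) / energyGain CR α τ))
            ≤ M ^ γ * x ^ (-γ) := by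
          have h1 := inner_ge (α := α) hx₀ hCβ hCδ hCR hξ hxM
          simp only [wF] at h1
          calc Real.exp (-(∫ τ in ξ..x,
                (birthRate x₀ Cβ α τ + deathRate Cδ α τ) / energyGain CR α τ))
              ≤ Real.exp (-(γ * Real.log (x / M))) := Real.exp_le_exp.2 (neg_le_neg h1)
            _ = M ^ γ * x ^ (-γ) := exp_eval γ hM hxp
        have h01 : (0:ℝ) ≤ (Cβ / CR) * x⁻¹ :=
          mul_nonneg (div_nonneg hCβ.le hCR.le) (inv_nonneg.2 hxp.le)
        have hfx0 : 0 ≤ f (x - x₀) := hf0 _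
        have hfx1 : f (x - x₀) ≤ 1 := hf1 _ (sub_pos.2 hxx)
        have step : birthRate x₀ Cβ α x / energyGain CR α x *
              Real.exp (-(∫ τ in ξ..x,
                (birthRate x₀ Cβ α τ + deathRate Cδ α τ) / energyGain CR α τ)) *
              f (x - x₀) ≤ ((Cβ / CR) * x⁻¹) * (M ^ γ * x ^ (-γ)) * 1 := by
          rw [bg_eq hx₀ hxx]
          apply mul_le_mul _ hfx1 hfx0 _
          · exact mul_le_mul_of_nonneg_left hexp h01
          · exact mul_nonneg h01 (mul_nonneg (Real.rpow_nonneg hM.le _)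
              (Real.rpow_nonneg hxp.le _))
        calc birthRate x₀ Cβ α x / energyGain CR α x *
              Real.exp (-(∫ τ in ξ..x,
                (birthRate x₀ Cβ α τ + deathRate Cδ α τ) / energyGain CR α τ)) *
              f (x - x₀) ≤ ((Cβ / CR) * x⁻¹) * (M ^ γ * x ^ (-γ)) * 1 := step
          _ = ((Cβ / CR) * M ^ γ) * x ^ (-γ - 1) := by
              rw [← inv_mul_rpow γ hxp]; ring
          _ = G x := by rw [hGdef, Set.indicator_of_mem (Set.mem_Ioi.2 hxM)]
      · rw [bg_zero hxx, zero_mul, zero_mul]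
        exact hGnn x
  have hGeval : ∫ x in Ioi ξ, G x = Cβ / (Cβ + Cδ) := by
    rw [hGdef, setIntegral_indicator measurableSet_Ioi, Set.Ioi_inter_Ioi,
      sup_eq_right.2 (le_max_left ξ x₀), ← hMdef,
      rpow_model_integral hγ hM ((Cβ / CR) * M ^ γ)]
    have hMγ : M ^ γ * M ^ (-γ) = 1 := by
      rw [← Real.rpow_add hM]; simp
    rw [mul_assoc, hMγ, mul_one, hγdef]
    rw [div_div_div_cancel_right₀]
    exact hCR.ne'
  rw [hGeval] at hGle
  exact hGle

lemma model_integrableOn (hx₀ : 0 < x₀) {γ : ℝ} (hγ : 0 < γ) {ξ : ℝ} (hξ0 : 0 < ξ)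
    (h : ℝ → ℝ) (hm : Measurable h) (h0 : ∀ y, 0 ≤ h y) (h1 : ∀ y, h y ≤ 1) (c : ℝ) :
    IntegrableOn (fun x => c * (ξ ^ γ * x ^ (-γ - 1)) * h (x - x₀)) (Ioi ξ) := by
  have hdom : IntegrableOn (fun x : ℝ => (|c| * ξ ^ γ) * x ^ (-γ - 1)) (Ioi ξ) :=
    (integrableOn_Ioi_rpow_of_lt (by linarith) hξ0).const_mul _
  apply Integrable.mono hdom
  · exact (((measurable_rpow_const' (-γ - 1)).const_mul (ξ ^ γ)).const_mul c |>.mul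
      (hm.comp (measurable_id.sub measurable_const))).aestronglyMeasurable
  · filter_upwards [self_mem_ae_restrict measurableSet_Ioi] with x hx
    have hxp : 0 < x := hξ0.trans hx
    have hh : |h (x - x₀)| ≤ 1 := abs_le.2 ⟨by linarith [h0 (x - x₀)], h1 _⟩
    rw [Real.norm_eq_abs, Real.norm_eq_abs, abs_mul]
    calc |c * (ξ ^ γ * x ^ (-γ - 1))| * |h (x - x₀)|
        ≤ |c * (ξ ^ γ * x ^ (-γ - 1))| * 1 := mul_le_mul_of_nonneg_left hh (abs_nonneg _)
      _ = |c| * (ξ ^ γ * x ^ (-γ - 1)) := by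
          rw [mul_one, abs_mul, abs_of_nonneg (mul_nonneg (Real.rpow_nonneg hξ0.le _)
            (Real.rpow_nonneg hxp.le _))]
      _ ≤ |(|c| * ξ ^ γ) * x ^ (-γ - 1)| := by rw [mul_assoc]; exact le_abs_self _

lemma nice_step (hx₀ : 0 < x₀) (hCβ : 0 < Cβ) (hCδ : 0 < Cδ) (hCR : 0 < CR)
    (f : ℝ → ℝ) (hf0 : ∀ y, 0 ≤ f y) (hf1 : ∀ y, 0 < y → f y ≤ 1)
    (hfm : ∃ h : ℝ → ℝ, Measurable h ∧ (∀ y, 0 ≤ h y) ∧ (∀ y, h y ≤ 1) ∧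
      ∀ y, 0 < y → f y = h y) :
    (∀ y, 0 ≤ Kop x₀ Cβ Cδ CR α f y) ∧ (∀ y, 0 < y → Kop x₀ Cβ Cδ CR α f y ≤ 1) ∧
    ∃ h : ℝ → ℝ, Measurable h ∧ (∀ y, 0 ≤ h y) ∧ (∀ y, h y ≤ 1) ∧
      ∀ y, 0 < y → Kop x₀ Cβ Cδ CR α f y = h y := by
  obtain ⟨h, hm, h0, h1, hfh⟩ := hfm
  have hsum : 0 < Cβ + Cδ := by linarith
  have hγ : 0 < (Cβ + Cδ) / CR := div_pos hsum hCR
  have hp1 : Cβ / (Cβ + Cδ) ≤ 1 := (div_le_one hsum).2 (by linarith)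
  refine ⟨Kop_nonneg hx₀ hCβ hCR f hf0,
    fun y hy => (Kop_le_p hx₀ hCβ hCδ hCR f hf0 hf1 hy).trans hp1, ?_⟩
  set γ := (Cβ + Cδ) / CR with hγdef
  set ψ : ℝ → ℝ := Set.indicator (Ioi x₀) (fun x => x ^ (-γ - 1) * h (x - x₀)) with hψdef
  have ψ_nn : ∀ x, 0 ≤ ψ x := by
    intro x
    apply Set.indicator_nonneg
    intro y hy
    exact mul_nonneg (Real.rpow_nonneg (le_of_lt (hx₀.trans hy)) _) (h0 _)
  have ψ_int : Integrable ψ volume := by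
    apply (integrable_indicator_iff measurableSet_Ioi).2
    apply Integrable.mono (integrableOn_Ioi_rpow_of_lt (show -γ - 1 < -1 by linarith) hx₀)
    · exact ((measurable_rpow_const' _).mul
        (hm.comp (measurable_id.sub measurable_const))).aestronglyMeasurable
    · filter_upwards [self_mem_ae_restrict measurableSet_Ioi] with x hx
      have hh : |h (x - x₀)| ≤ 1 := abs_le.2 ⟨by linarith [h0 (x - x₀)], h1 _⟩
      rw [Real.norm_eq_abs, Real.norm_eq_abs, abs_mul]
      calc |x ^ (-γ - 1)| * |h (x - x₀)| ≤ |x ^ (-γ - 1)| * 1 :=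
            mul_le_mul_of_nonneg_left hh (abs_nonneg _)
        _ = |x ^ (-γ - 1)| := mul_one _
  set Φ : ℝ → ℝ := fun η => ∫ x in Ioi η, ψ x with hΦdef
  have Φ_anti : Antitone Φ := by
    intro a b hab
    exact setIntegral_mono_set ψ_int.integrableOn
      (Filter.Eventually.of_forall fun x => ψ_nn x)
      (HasSubset.Subset.eventuallyLE (Ioi_subset_Ioi hab))
  have key : ∀ η, x₀ ≤ η → Kop x₀ Cβ Cδ CR α f η = (Cβ / CR) * η ^ γ * Φ η := by
    intro η hη
    rw [Kop_eq hx₀ hη f]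
    have congr1 : EqOn (fun x => (Cβ / CR) * (η ^ γ * x ^ (-γ - 1)) * f (x - x₀))
        (fun x => ((Cβ / CR) * η ^ γ) * ψ x) (Ioi η) := by
      intro x hx
      have hxx : x₀ < x := lt_of_le_of_lt hη hx
      dsimp only
      rw [hψdef, Set.indicator_of_mem (Set.mem_Ioi.2 hxx), ← hfh (x - x₀) (sub_pos.2 hxx)]
      ring
    rw [setIntegral_congr_fun measurableSet_Ioi congr1, MeasureTheory.integral_const_mul]
  have key2 : ∀ η, 0 < η → η < x₀ →
      Kop x₀ Cβ Cδ CR α f η = (η / x₀) ^ (Cδ / CR) * ((Cβ / CR) * x₀ ^ γ * Φ x₀) := by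
    intro η hη hηx
    unfold Kop
    have congr2 : EqOn (fun x => birthRate x₀ Cβ α x / energyGain CR α x *
          Real.exp (-(∫ τ in η..x,
            (birthRate x₀ Cβ α τ + deathRate Cδ α τ) / energyGain CR α τ)) * f (x - x₀))
        (fun x => ((η / x₀) ^ (Cδ / CR) * ((Cβ / CR) * x₀ ^ γ)) * ψ x) (Ioi η) := by
      intro x hx
      dsimp only
      by_cases hxx : x₀ < x
      · have hxp : 0 < x := hx₀.trans hxx
        have e0 : (∫ τ in η..x, wF x₀ Cβ Cδ CR α τ)
            = (Cδ / CR) * Real.log (x₀ / η) + γ * Real.log (x / x₀) :=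
          inner_lt hx₀ hη hηx.le hxx.le
        simp only [wF] at e0
        rw [e0, neg_add, Real.exp_add, exp_eval (Cδ / CR) hη hx₀, exp_eval γ hx₀ hxp,
          bg_eq hx₀ hxx, hψdef, Set.indicator_of_mem (Set.mem_Ioi.2 hxx),
          ← hfh _ (sub_pos.2 hxx), ← inv_mul_rpow γ hxp,
          Real.div_rpow hη.le hx₀.le, Real.rpow_neg hx₀.le]
        ring
      · rw [bg_zero hxx, zero_mul, zero_mul, hψdef,
          Set.indicator_of_notMem (fun hmem => hxx (Set.mem_Ioi.1 hmem)), mul_zero]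
    rw [setIntegral_congr_fun measurableSet_Ioi congr2, MeasureTheory.integral_const_mul]
    have hΦeq : ∫ x in Ioi η, ψ x = Φ x₀ := by
      show _ = ∫ x in Ioi x₀, ψ x
      rw [hψdef, setIntegral_indicator measurableSet_Ioi,
        setIntegral_indicator measurableSet_Ioi, Set.Ioi_inter_Ioi, Set.Ioi_inter_Ioi,
        sup_eq_right.2 hηx.le, sup_idem]
    rw [hΦeq]
    ring
  refine ⟨fun η => (max 0 (min (η / x₀) 1)) ^ (Cδ / CR) *
      ((Cβ / CR) * (max η x₀) ^ γ * Φ (max η x₀)), ?_, ?_, ?_, ?_⟩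
  · apply Measurable.mul
    · exact (measurable_rpow_const' _).comp
        (measurable_const.max ((measurable_id.div_const x₀).min measurable_const))
    · exact (measurable_const.mul
        ((measurable_rpow_const' γ).comp (measurable_id.max measurable_const))).mul
        (Φ_anti.measurable.comp (measurable_id.max measurable_const))
  · intro y
    dsimp only
    have hKv : (Cβ / CR) * (max y x₀) ^ γ * Φ (max y x₀) = Kop x₀ Cβ Cδ CR α f (max y x₀) :=
      (key _ (le_max_right _ _)).symm
    rw [hKv]
    exact mul_nonneg (Real.rpow_nonneg (le_max_left 0 _) _)
      (Kop_nonneg hx₀ hCβ hCR f hf0 _)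
  · intro y
    dsimp only
    have hKv : (Cβ / CR) * (max y x₀) ^ γ * Φ (max y x₀) = Kop x₀ Cβ Cδ CR α f (max y x₀) :=
      (key _ (le_max_right _ _)).symm
    rw [hKv]
    have hb1 : Kop x₀ Cβ Cδ CR α f (max y x₀) ≤ 1 :=
      (Kop_le_p hx₀ hCβ hCδ hCR f hf0 hf1 (lt_max_of_lt_right hx₀)).trans hp1
    have ha1 : (max (0:ℝ) (min (y / x₀) 1)) ^ (Cδ / CR) ≤ 1 :=
      Real.rpow_le_one (le_max_left 0 _) (max_le zero_le_one (min_le_right _ _))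
        (div_nonneg hCδ.le hCR.le)
    calc (max (0:ℝ) (min (y / x₀) 1)) ^ (Cδ / CR) * Kop x₀ Cβ Cδ CR α f (max y x₀)
        ≤ 1 * 1 := mul_le_mul ha1 hb1 (Kop_nonneg hx₀ hCβ hCR f hf0 _) zero_le_one
      _ = 1 := mul_one 1
  · intro y hy
    dsimp only
    rcases le_or_gt x₀ y with hc | hc
    · rw [key y hc]
      have h1' : max (0:ℝ) (min (y / x₀) 1) = 1 := by
        rw [min_eq_right ((one_le_div hx₀).2 hc), max_eq_right zero_le_one]
      rw [h1', Real.one_rpow, one_mul, max_eq_left hc]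
    · rw [key2 y hy hc]
      have h1' : max (0:ℝ) (min (y / x₀) 1) = y / x₀ := by
        rw [min_eq_left (le_of_lt ((div_lt_one hx₀).2 hc)),
          max_eq_right (le_of_lt (div_pos hy hx₀))]
      rw [h1', max_eq_right hc.le]

lemma nice_iter (hx₀ : 0 < x₀) (hCβ : 0 < Cβ) (hCδ : 0 < Cδ) (hCR : 0 < CR) :
    ∀ k : ℕ,
    (∀ y, 0 ≤ (Kop x₀ Cβ Cδ CR α)^[k] (fun _ => 1) y) ∧
    (∀ y, 0 < y → (Kop x₀ Cβ Cδ CR α)^[k] (fun _ => 1) y ≤ 1) ∧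
    ∃ h : ℝ → ℝ, Measurable h ∧ (∀ y, 0 ≤ h y) ∧ (∀ y, h y ≤ 1) ∧
      ∀ y, 0 < y → (Kop x₀ Cβ Cδ CR α)^[k] (fun _ => 1) y = h y := by
  intro k
  induction k with
  | zero =>
      exact ⟨fun y => by simp, fun y _ => by simp,
        ⟨fun _ => 1, measurable_const, fun _ => zero_le_one, fun _ => le_rfl,
          fun y _ => by simp⟩⟩
  | succ k ih =>
      obtain ⟨ih0, ih1, ihm⟩ := ih
      simp only [Function.iterate_succ_apply']
      exact nice_step hx₀ hCβ hCδ hCR _ ih0 ih1 ihm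

lemma claimC (hx₀ : 0 < x₀) (hCβ : 0 < Cβ) (hCδ : 0 < Cδ) (hCR : 0 < CR) :
    ∀ k : ℕ, ∀ ξ : ℝ, (k : ℝ) * x₀ ≤ ξ →
      (Cβ / (Cβ + Cδ)) ^ k ≤ (Kop x₀ Cβ Cδ CR α)^[k] (fun _ => 1) ξ := by
  have hsum : 0 < Cβ + Cδ := by linarith
  have hγ : 0 < (Cβ + Cδ) / CR := div_pos hsum hCR
  intro k
  induction k with
  | zero => intro ξ _; simp
  | succ k ih =>
    intro ξ hξ
    have hk0 : (0:ℝ) ≤ (k:ℝ) := Nat.cast_nonneg k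
    have hξx₀ : x₀ ≤ ξ := by
      push_cast at hξ
      nlinarith
    have hξ0 : 0 < ξ := lt_of_lt_of_le hx₀ hξx₀
    rw [Function.iterate_succ_apply']
    obtain ⟨h0, h1, h, hm, hh0, hh1, hfh⟩ := nice_iter (α := α) hx₀ hCβ hCδ hCR k
    set f := (Kop x₀ Cβ Cδ CR α)^[k] (fun _ => 1) with hfdef
    rw [Kop_eq hx₀ hξx₀ f]
    set γ := (Cβ + Cδ) / CR with hγdef
    have hInt : IntegrableOn (fun x => (Cβ / CR) * (ξ ^ γ * x ^ (-γ - 1)) * f (x - x₀))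
        (Ioi ξ) := by
      apply (model_integrableOn hx₀ hγ hξ0 h hm hh0 hh1 (Cβ / CR)).congr_fun ?_
        measurableSet_Ioi
      intro x hx
      dsimp only
      rw [← hfh (x - x₀) (sub_pos.2 (lt_of_le_of_lt hξx₀ hx))]
    have hIntL : IntegrableOn
        (fun x : ℝ => (Cβ / CR) * (ξ ^ γ * x ^ (-γ - 1)) * (Cβ / (Cβ + Cδ)) ^ k)
        (Ioi ξ) := by
      apply IntegrableOn.congr_fun
        ((integrableOn_Ioi_rpow_of_lt (show -γ - 1 < -1 by linarith) hξ0).const_mul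
          ((Cβ / CR) * ξ ^ γ * (Cβ / (Cβ + Cδ)) ^ k)) ?_ measurableSet_Ioi
      intro x _
      dsimp only
      ring
    have hmono : ∫ x in Ioi ξ, (Cβ / CR) * (ξ ^ γ * x ^ (-γ - 1)) * (Cβ / (Cβ + Cδ)) ^ k
        ≤ ∫ x in Ioi ξ, (Cβ / CR) * (ξ ^ γ * x ^ (-γ - 1)) * f (x - x₀) := by
      apply setIntegral_mono_on hIntL hInt measurableSet_Ioi
      intro x hx
      have hxξ : ξ < x := Set.mem_Ioi.1 hx
      apply mul_le_mul_of_nonneg_left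
      · apply ih (x - x₀)
        push_cast at hξ
        linarith
      · exact mul_nonneg (div_nonneg hCβ.le hCR.le)
          (mul_nonneg (Real.rpow_nonneg hξ0.le _)
            (Real.rpow_nonneg (hξ0.trans hxξ).le _))
    have heval : ∫ x in Ioi ξ, (Cβ / CR) * (ξ ^ γ * x ^ (-γ - 1)) * (Cβ / (Cβ + Cδ)) ^ k
        = (Cβ / (Cβ + Cδ)) ^ (k + 1) := by
      have hcongr : EqOn
          (fun x : ℝ => (Cβ / CR) * (ξ ^ γ * x ^ (-γ - 1)) * (Cβ / (Cβ + Cδ)) ^ k)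
          (fun x : ℝ => ((Cβ / CR) * ξ ^ γ * (Cβ / (Cβ + Cδ)) ^ k) * x ^ (-γ - 1))
          (Ioi ξ) := fun x _ => by dsimp only; ring
      rw [setIntegral_congr_fun measurableSet_Ioi hcongr, rpow_model_integral hγ hξ0]
      have hξγ : ξ ^ γ * ξ ^ (-γ) = 1 := by rw [← Real.rpow_add hξ0]; simp
      have hre : ((Cβ / CR) * ξ ^ γ * (Cβ / (Cβ + Cδ)) ^ k) * ξ ^ (-γ) / γ
          = ((Cβ / CR) / γ) * (Cβ / (Cβ + Cδ)) ^ k * (ξ ^ γ * ξ ^ (-γ)) := by ring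
      have hpp : Cβ / CR / ((Cβ + Cδ) / CR) = Cβ / (Cβ + Cδ) := by
        rw [div_div_div_cancel_right₀]
        exact hCR.ne'
      rw [hre, hξγ, mul_one, hγdef, hpp, pow_succ]
      ring
    rw [← heval]
    exact hmono

end

end Stmt11Aux

open Stmt11Aux Set Real

/-- Lemma 6.17: for every `k ≥ 1`,
`K^k 𝟏(x₀) ≥ (C_β/(C_β+C_δ))^k · k^{−(C_β+C_δ)/C_R}`. -/
theorem stmt11 (α x₀ Cβ Cδ CR : ℝ)
    (hα0 : 0 < α) (hα1 : α ≤ 1) (hx₀ : 0 < x₀)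
    (hCβ : 0 < Cβ) (hCδ : 0 < Cδ) (hCR : 0 < CR) :
    ∀ k : ℕ, 1 ≤ k →
      (Cβ / (Cβ + Cδ)) ^ k * (k : ℝ) ^ (-((Cβ + Cδ) / CR)) ≤
        (Kop x₀ Cβ Cδ CR α)^[k] (fun _ => 1) x₀ := by
  intro k hk
  obtain ⟨j, rfl⟩ : ∃ j, k = j + 1 := ⟨k - 1, (Nat.succ_pred_eq_of_pos hk).symm⟩
  have hsum : 0 < Cβ + Cδ := by linarith
  have hγ : 0 < (Cβ + Cδ) / CR := div_pos hsum hCR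
  have hj0 : (0:ℝ) ≤ (j:ℝ) := Nat.cast_nonneg j
  rw [Function.iterate_succ_apply']
  obtain ⟨h0, h1, h, hm, hh0, hh1, hfh⟩ := nice_iter (α := α) hx₀ hCβ hCδ hCR j
  set f := (Kop x₀ Cβ Cδ CR α)^[j] (fun _ => 1) with hfdef
  rw [Kop_eq hx₀ le_rfl f]
  set γ := (Cβ + Cδ) / CR with hγdef
  set a := ((j:ℝ) + 1) * x₀ with hadef
  have hax : x₀ ≤ a := by nlinarith
  have ha0 : 0 < a := lt_of_lt_of_le hx₀ hax
  have hInt : IntegrableOn (fun x => (Cβ / CR) * (x₀ ^ γ * x ^ (-γ - 1)) * f (x - x₀))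
      (Ioi x₀) := by
    apply (model_integrableOn hx₀ hγ hx₀ h hm hh0 hh1 (Cβ / CR)).congr_fun ?_
      measurableSet_Ioi
    intro x hx
    dsimp only
    rw [← hfh (x - x₀) (sub_pos.2 hx)]
  have hFnn : ∀ x ∈ Ioi x₀, 0 ≤ (Cβ / CR) * (x₀ ^ γ * x ^ (-γ - 1)) * f (x - x₀) := by
    intro x hx
    exact mul_nonneg (mul_nonneg (div_nonneg hCβ.le hCR.le)
      (mul_nonneg (Real.rpow_nonneg hx₀.le _)
        (Real.rpow_nonneg (hx₀.trans hx).le _))) (h0 _)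
  have step1 : ∫ x in Ioi a, (Cβ / CR) * (x₀ ^ γ * x ^ (-γ - 1)) * f (x - x₀)
      ≤ ∫ x in Ioi x₀, (Cβ / CR) * (x₀ ^ γ * x ^ (-γ - 1)) * f (x - x₀) := by
    apply setIntegral_mono_set hInt
    · rw [Filter.EventuallyLE, ae_restrict_iff' measurableSet_Ioi]
      exact Filter.Eventually.of_forall hFnn
    · exact HasSubset.Subset.eventuallyLE (Ioi_subset_Ioi hax)
  have hIntL : IntegrableOn
      (fun x : ℝ => ((Cβ / CR) * x₀ ^ γ * (Cβ / (Cβ + Cδ)) ^ j) * x ^ (-γ - 1))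
      (Ioi a) :=
    (integrableOn_Ioi_rpow_of_lt (show -γ - 1 < -1 by linarith) ha0).const_mul _
  have step2 : ∫ x in Ioi a, ((Cβ / CR) * x₀ ^ γ * (Cβ / (Cβ + Cδ)) ^ j) * x ^ (-γ - 1)
      ≤ ∫ x in Ioi a, (Cβ / CR) * (x₀ ^ γ * x ^ (-γ - 1)) * f (x - x₀) := by
    apply setIntegral_mono_on hIntL (hInt.mono_set (Ioi_subset_Ioi hax)) measurableSet_Ioi
    intro x hx
    have hxa : a < x := Set.mem_Ioi.1 hx
    have hxp : 0 < x := ha0.trans hxa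
    have hcl := claimC (α := α) hx₀ hCβ hCδ hCR j (x - x₀) (by rw [hadef] at hxa; linarith)
    rw [← hfdef] at hcl
    calc ((Cβ / CR) * x₀ ^ γ * (Cβ / (Cβ + Cδ)) ^ j) * x ^ (-γ - 1)
        = ((Cβ / CR) * (x₀ ^ γ * x ^ (-γ - 1))) * (Cβ / (Cβ + Cδ)) ^ j := by ring
      _ ≤ ((Cβ / CR) * (x₀ ^ γ * x ^ (-γ - 1))) * f (x - x₀) := by
          apply mul_le_mul_of_nonneg_left hcl
          exact mul_nonneg (div_nonneg hCβ.le hCR.le)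
            (mul_nonneg (Real.rpow_nonneg hx₀.le _) (Real.rpow_nonneg hxp.le _))
  have heval : ∫ x in Ioi a, ((Cβ / CR) * x₀ ^ γ * (Cβ / (Cβ + Cδ)) ^ j) * x ^ (-γ - 1)
      = (Cβ / (Cβ + Cδ)) ^ (j + 1) * ((j:ℝ) + 1) ^ (-γ) := by
    rw [rpow_model_integral hγ ha0]
    have hax₀γ : x₀ ^ γ * x₀ ^ (-γ) = 1 := by rw [← Real.rpow_add hx₀]; simp
    have hpp : Cβ / CR / ((Cβ + Cδ) / CR) = Cβ / (Cβ + Cδ) := by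
      rw [div_div_div_cancel_right₀]
      exact hCR.ne'
    rw [hadef, Real.mul_rpow (by linarith : (0:ℝ) ≤ (j:ℝ) + 1) hx₀.le]
    have hre : ((Cβ / CR) * x₀ ^ γ * (Cβ / (Cβ + Cδ)) ^ j) *
          (((j:ℝ) + 1) ^ (-γ) * x₀ ^ (-γ)) / γ
        = ((Cβ / CR) / γ) * (Cβ / (Cβ + Cδ)) ^ j * (x₀ ^ γ * x₀ ^ (-γ)) *
          ((j:ℝ) + 1) ^ (-γ) := by ring
    rw [hre, hax₀γ, mul_one, hγdef, hpp, pow_succ]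
    ring
  have hcast : ((j + 1 : ℕ) : ℝ) = (j:ℝ) + 1 := by push_cast; ring
  calc (Cβ / (Cβ + Cδ)) ^ (j + 1) * ((j + 1 : ℕ) : ℝ) ^ (-γ)
      = (Cβ / (Cβ + Cδ)) ^ (j + 1) * ((j:ℝ) + 1) ^ (-γ) := by rw [hcast]
    _ = ∫ x in Ioi a, ((Cβ / CR) * x₀ ^ γ * (Cβ / (Cβ + Cδ)) ^ j) * x ^ (-γ - 1) :=
        heval.symm
    _ ≤ ∫ x in Ioi a, (Cβ / CR) * (x₀ ^ γ * x ^ (-γ - 1)) * f (x - x₀) := step2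
    _ ≤ ∫ x in Ioi x₀, (Cβ / CR) * (x₀ ^ γ * x ^ (-γ - 1)) * f (x - x₀) := step1
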